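/- arXiv:1409.2731 — 2 statements merged into one kernel-verified Lean document; each statement's English description precedes it below -/
import Mathlib

section
/- For every integer k ≥ 2, the pigeonhole principle formula PHP^k_{k−1} has a Lasserre refutation of rank 2. -/
namespace NarrowProofs

open MvPolynomial

/-- A clause is a finite set of literals; a literal is a variable together with a
sign (`true` = positive literal, `false` = negative literal). -/
abbrev Clause (V : Type) := Finset (V × Bool)

/-- Twin-variable alphabet: `(v, false)` is the variable `v` itself and
`(v, true)` is its twin `v̄` (intended value `1 − v`). -/
abbrev PV (V : Type) := V × Bool

/-- The expansion of one term of a Sherali-Adams style derivation: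
`∏_{i∈I} x_i · ∏_{j∈J} (1−x_j) · p`. -/
noncomputable def expandTerm {σ : Type} (I J : Finset σ) (p : MvPolynomial σ ℝ) :
    MvPolynomial σ ℝ :=
  (∏ i ∈ I, X i) * (∏ j ∈ J, (1 - X j)) * p

/-- A Sherali-Adams style derivation of the inequality `r ≥ 0`, where each
`p_t` must come from the allowed set `Ax`: a formula
`∑_t α_t · ∏_{i∈I_t} x_i · ∏_{j∈J_t} (1−x_j) · p_t` with `α_t ≥ 0` that
expands to the polynomial `r`. -/
structure SAStyleDeriv (σ : Type) (Ax : Set (MvPolynomial σ ℝ))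
    (r : MvPolynomial σ ℝ) where
  len : ℕ
  α : Fin len → ℝ
  I : Fin len → Finset σ
  J : Fin len → Finset σ
  p : Fin len → MvPolynomial σ ℝ
  alpha_nonneg : ∀ t, 0 ≤ α t
  p_mem : ∀ t, p t ∈ Ax
  sums : ∑ t, α t • expandTerm (I t) (J t) (p t) = r

/-- The rank of the derivation is at most `d`: every expanded term has total
degree at most `d`. -/
def SAStyleDeriv.rankLE {σ : Type} {Ax : Set (MvPolynomial σ ℝ)}
    {r : MvPolynomial σ ℝ} (der : SAStyleDeriv σ Ax r) (d : ℕ) : Prop :=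
  ∀ t, (expandTerm (der.I t) (der.J t) (der.p t)).totalDegree ≤ d

/-- The size of the derivation: the total number of terms of the expanded
polynomials. -/
noncomputable def SAStyleDeriv.size {σ : Type} {Ax : Set (MvPolynomial σ ℝ)}
    {r : MvPolynomial σ ℝ} (der : SAStyleDeriv σ Ax r) : ℕ :=
  ∑ t, (expandTerm (der.I t) (der.J t) (der.p t)).support.card

/-- Boolean axioms `x²−x` and `x−x²`. -/
def boolAxioms (σ : Type) : Set (MvPolynomial σ ℝ) :=
  {p | ∃ x : σ, p = X x ^ 2 - X x ∨ p = X x - X x ^ 2}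

/-- The polynomials allowed in a Sherali-Adams derivation from hypotheses `Q`:
a hypothesis, a Boolean axiom, or the constant 1. -/
def SAAxioms (σ : Type) (Q : Set (MvPolynomial σ ℝ)) : Set (MvPolynomial σ ℝ) :=
  Q ∪ boolAxioms σ ∪ {1}

/-- The polynomials allowed in a Lasserre derivation from hypotheses `Q`:
a hypothesis, a Boolean axiom, the constant 1, or the square of an arbitrary
polynomial. -/
def LasAxioms (σ : Type) (Q : Set (MvPolynomial σ ℝ)) : Set (MvPolynomial σ ℝ) :=
  SAAxioms σ Q ∪ {p | ∃ q : MvPolynomial σ ℝ, p = q ^ 2}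

/-- The SA encoding (truth = 1) of a clause:
`∑_{i∈I} x_i + ∑_{j∈J} (1−x_j) − 1`. -/
noncomputable def encodeIneqSA {V : Type} [DecidableEq V] (C : Clause V) :
    MvPolynomial V ℝ :=
  (∑ l ∈ C, if l.2 then X l.1 else (1 - X l.1)) - 1

/-- The pigeonhole principle formula `PHP^k_{k−1}` with `k` pigeons and `k−1`
holes; the variable `(u, w)` means pigeon `u` sits in hole `w` (1-based
indices). -/
def PHPf (k : ℕ) : Set (Clause (ℕ × ℕ)) :=
  { C |
    (∃ u, 1 ≤ u ∧ u ≤ k ∧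
      C = (Finset.Icc 1 (k - 1)).image (fun w => (((u, w) : ℕ × ℕ), true))) ∨
    (∃ u v w, 1 ≤ u ∧ u ≤ k ∧ 1 ≤ v ∧ v ≤ k ∧ u ≠ v ∧ 1 ≤ w ∧ w ≤ k - 1 ∧
      C = {(((u, w) : ℕ × ℕ), false), (((v, w) : ℕ × ℕ), false)}) }

/-! ### Auxiliary material for the rank-2 Lasserre refutation of PHP -/

theorem expandTerm_nil {σ : Type} (p : MvPolynomial σ ℝ) : expandTerm ∅ ∅ p = p := by
  simp [expandTerm]

theorem expandTerm_single {σ : Type} (a : σ) (p : MvPolynomial σ ℝ) :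
    expandTerm {a} ∅ p = X a * p := by
  simp [expandTerm]

theorem las_mem_of_Q {σ : Type} {Q : Set (MvPolynomial σ ℝ)} {p : MvPolynomial σ ℝ}
    (h : p ∈ Q) : p ∈ LasAxioms σ Q := Or.inl (Or.inl (Or.inl h))

theorem las_mem_of_bool {σ : Type} {Q : Set (MvPolynomial σ ℝ)} {p : MvPolynomial σ ℝ}
    (h : p ∈ boolAxioms σ) : p ∈ LasAxioms σ Q := Or.inl (Or.inl (Or.inr h))

theorem las_mem_of_one {σ : Type} {Q : Set (MvPolynomial σ ℝ)} :
    (1 : MvPolynomial σ ℝ) ∈ LasAxioms σ Q := Or.inl (Or.inr rfl)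

theorem las_mem_of_sq {σ : Type} {Q : Set (MvPolynomial σ ℝ)} (q : MvPolynomial σ ℝ) :
    q ^ 2 ∈ LasAxioms σ Q := Or.inr ⟨q, rfl⟩

/-- Build a derivation from a family indexed by an arbitrary fintype. -/
noncomputable def derivOfFintype {σ : Type} {Ax : Set (MvPolynomial σ ℝ)}
    {r : MvPolynomial σ ℝ} {ι : Type} [Fintype ι]
    (a : ι → ℝ) (I J : ι → Finset σ) (p : ι → MvPolynomial σ ℝ)
    (hα : ∀ i, 0 ≤ a i) (hp : ∀ i, p i ∈ Ax)
    (hsum : ∑ i, a i • expandTerm (I i) (J i) (p i) = r) : SAStyleDeriv σ Ax r where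
  len := Fintype.card ι
  α := a ∘ (Fintype.equivFin ι).symm
  I := I ∘ (Fintype.equivFin ι).symm
  J := J ∘ (Fintype.equivFin ι).symm
  p := p ∘ (Fintype.equivFin ι).symm
  alpha_nonneg := fun t => hα _
  p_mem := fun t => hp _
  sums := by
    rw [← hsum]
    exact Equiv.sum_comp (Fintype.equivFin ι).symm
      (fun i => a i • expandTerm (I i) (J i) (p i))

theorem derivOfFintype_rankLE {σ : Type} {Ax : Set (MvPolynomial σ ℝ)}
    {r : MvPolynomial σ ℝ} {ι : Type} [Fintype ι]
    (a : ι → ℝ) (I J : ι → Finset σ) (p : ι → MvPolynomial σ ℝ)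
    (hα : ∀ i, 0 ≤ a i) (hp : ∀ i, p i ∈ Ax)
    (hsum : ∑ i, a i • expandTerm (I i) (J i) (p i) = r) {d : ℕ}
    (hd : ∀ i, (expandTerm (I i) (J i) (p i)).totalDegree ≤ d) :
    (derivOfFintype a I J p hα hp hsum).rankLE d := fun t => hd _

theorem hole_id {R : Type*} [CommRing R] {n : ℕ} (y : Fin n → R) :
    (1 - ∑ u, y u)^2 + (∑ u, (y u - y u^2))
      + (∑ u, ∑ v, if u = v then 0 else (y u * (1 - y u - y v) + (y u ^ 2 - y u)))
      = 1 - ∑ u, y u := by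
  have h1 : ∀ u v : Fin n,
      (if u = v then (0:R) else (y u * (1 - y u - y v) + (y u ^ 2 - y u)))
        = -(y u * y v) + (if u = v then y u * y v else 0) := by
    intro u v
    by_cases h : u = v
    · subst h; simp
    · rw [if_neg h, if_neg h]; ring
  have e2 : ∑ x : Fin n, ∑ x1 : Fin n, -(y x * y x1)
      = -((∑ u : Fin n, y u) * (∑ u : Fin n, y u)) := by
    rw [Finset.sum_mul_sum]
    simp
  have e1 : ∑ u, (y u - y u^2) = (∑ u, y u) - ∑ u, (y u ^ 2) := by
    rw [Finset.sum_sub_distrib]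
  simp only [h1, Finset.sum_add_distrib, Finset.sum_ite_eq, Finset.mem_univ, if_true]
  rw [e1, e2]
  have e3 : ∑ x : Fin n, y x * y x = ∑ x : Fin n, y x ^ 2 := by
    apply Finset.sum_congr rfl; intro x _; ring
  rw [e3]; ring

section PHPConstruction

variable (k : ℕ)

/-- The variable of pigeon `u` and hole `w` (0-based `Fin` indices). -/
def vr (u : Fin k) (w : Fin (k-1)) : ℕ × ℕ := (u.1 + 1, w.1 + 1)

/-- Index type for the terms of the refutation: pigeon axioms, squares,
boolean axioms `x−x²`, lifted hole axioms, boolean axioms `x²−x`. -/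
abbrev Idx := Fin k ⊕ Fin (k-1) ⊕ (Fin (k-1) × Fin k) ⊕
    (Fin (k-1) × Fin k × Fin k) ⊕ (Fin (k-1) × Fin k × Fin k)

noncomputable def Dα : Idx k → ℝ
  | .inl _ => 1
  | .inr (.inl _) => 1
  | .inr (.inr (.inl _)) => 1
  | .inr (.inr (.inr (.inl (_, u, v)))) => if u = v then 0 else 1
  | .inr (.inr (.inr (.inr (_, u, v)))) => if u = v then 0 else 1

def DI : Idx k → Finset (ℕ × ℕ)
  | .inr (.inr (.inr (.inl (w, u, _)))) => {vr k u w}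
  | _ => ∅

noncomputable def Dp : Idx k → MvPolynomial (ℕ × ℕ) ℝ
  | .inl u => (∑ w : Fin (k-1), X (vr k u w)) - 1
  | .inr (.inl w) => ((1 : MvPolynomial (ℕ × ℕ) ℝ) - ∑ u : Fin k, X (vr k u w)) ^ 2
  | .inr (.inr (.inl (w, u))) => X (vr k u w) - X (vr k u w) ^ 2
  | .inr (.inr (.inr (.inl (w, u, v)))) =>
      if u = v then 1 else 1 - X (vr k u w) - X (vr k v w)
  | .inr (.inr (.inr (.inr (w, u, v)))) => X (vr k u w) ^ 2 - X (vr k u w)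

end PHPConstruction

theorem php_main_sum (k : ℕ) (hk : 2 ≤ k) :
    ∑ t : Idx k, Dα k t • expandTerm (DI k t) ∅ (Dp k t) = -1 := by
  rw [Fintype.sum_sum_type, Fintype.sum_sum_type, Fintype.sum_sum_type,
    Fintype.sum_sum_type]
  simp only [Fintype.sum_prod_type]
  have hA : (∑ u : Fin k, Dα k (.inl u) • expandTerm (DI k (.inl u)) ∅ (Dp k (.inl u)))
      = ∑ u : Fin k, ((∑ w : Fin (k-1), X (vr k u w)) - 1) :=
    Finset.sum_congr rfl fun u _ => by simp [Dα, DI, Dp, expandTerm_nil]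
  have hB : (∑ w : Fin (k-1), Dα k (.inr (.inl w)) •
        expandTerm (DI k (.inr (.inl w))) ∅ (Dp k (.inr (.inl w))))
      = ∑ w : Fin (k-1), ((1 : MvPolynomial (ℕ × ℕ) ℝ) - ∑ u : Fin k, X (vr k u w)) ^ 2 :=
    Finset.sum_congr rfl fun w _ => by simp [Dα, DI, Dp, expandTerm_nil]
  have hC : (∑ w : Fin (k-1), ∑ u : Fin k, Dα k (.inr (.inr (.inl (w, u)))) •
        expandTerm (DI k (.inr (.inr (.inl (w, u))))) ∅ (Dp k (.inr (.inr (.inl (w, u))))))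
      = ∑ w : Fin (k-1), ∑ u : Fin k, (X (vr k u w) - X (vr k u w) ^ 2) :=
    Finset.sum_congr rfl fun w _ => Finset.sum_congr rfl fun u _ => by
      simp [Dα, DI, Dp, expandTerm_nil]
  have hD : (∑ w : Fin (k-1), ∑ u : Fin k, ∑ v : Fin k,
        Dα k (.inr (.inr (.inr (.inl (w, u, v))))) •
        expandTerm (DI k (.inr (.inr (.inr (.inl (w, u, v)))))) ∅
          (Dp k (.inr (.inr (.inr (.inl (w, u, v)))))))
      = ∑ w : Fin (k-1), ∑ u : Fin k, ∑ v : Fin k,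
          (if u = v then 0
           else X (vr k u w) * (1 - X (vr k u w) - X (vr k v w))) :=
    Finset.sum_congr rfl fun w _ => Finset.sum_congr rfl fun u _ =>
      Finset.sum_congr rfl fun v _ => by
        by_cases h : u = v
        · simp [Dα, DI, Dp, h]
        · simp [Dα, DI, Dp, h, expandTerm_single]
  have hE : (∑ w : Fin (k-1), ∑ u : Fin k, ∑ v : Fin k,
        Dα k (.inr (.inr (.inr (.inr (w, u, v))))) •
        expandTerm (DI k (.inr (.inr (.inr (.inr (w, u, v)))))) ∅
          (Dp k (.inr (.inr (.inr (.inr (w, u, v)))))))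
      = ∑ w : Fin (k-1), ∑ u : Fin k, ∑ v : Fin k,
          (if u = v then 0 else X (vr k u w) ^ 2 - X (vr k u w)) :=
    Finset.sum_congr rfl fun w _ => Finset.sum_congr rfl fun u _ =>
      Finset.sum_congr rfl fun v _ => by
        by_cases h : u = v
        · simp [Dα, DI, Dp, h]
        · simp [Dα, DI, Dp, h, expandTerm_nil]
  rw [hA, hB, hC, hD, hE]
  have merge : (∑ w : Fin (k-1), ((1 : MvPolynomial (ℕ × ℕ) ℝ) - ∑ u : Fin k, X (vr k u w)) ^ 2)
      + ((∑ w : Fin (k-1), ∑ u : Fin k, (X (vr k u w) - X (vr k u w) ^ 2))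
        + ((∑ w : Fin (k-1), ∑ u : Fin k, ∑ v : Fin k,
            (if u = v then 0 else X (vr k u w) * (1 - X (vr k u w) - X (vr k v w))))
          + (∑ w : Fin (k-1), ∑ u : Fin k, ∑ v : Fin k,
            (if u = v then 0 else X (vr k u w) ^ 2 - X (vr k u w)))))
      = ∑ w : Fin (k-1), ((1 : MvPolynomial (ℕ × ℕ) ℝ) - ∑ u : Fin k, X (vr k u w)) := by
    rw [← Finset.sum_add_distrib, ← Finset.sum_add_distrib, ← Finset.sum_add_distrib]
    apply Finset.sum_congr rfl
    intro w _
    have hcomb : ((∑ u : Fin k, ∑ v : Fin k,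
          (if u = v then 0 else X (vr k u w) * (1 - X (vr k u w) - X (vr k v w))))
        + ∑ u : Fin k, ∑ v : Fin k,
          (if u = v then (0 : MvPolynomial (ℕ × ℕ) ℝ) else X (vr k u w) ^ 2 - X (vr k u w)))
        = ∑ u : Fin k, ∑ v : Fin k, (if u = v then 0
            else (X (vr k u w) * (1 - X (vr k u w) - X (vr k v w))
              + (X (vr k u w) ^ 2 - X (vr k u w)))) := by
      rw [← Finset.sum_add_distrib]
      apply Finset.sum_congr rfl; intro u _
      rw [← Finset.sum_add_distrib]
      apply Finset.sum_congr rfl; intro v _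
      by_cases h : u = v <;> simp [h]
    rw [hcomb]
    have h2 := hole_id (fun u : Fin k => (X (vr k u w) : MvPolynomial (ℕ × ℕ) ℝ))
    linear_combination h2
  rw [merge]
  have hc : ∑ w : Fin (k-1), ∑ u : Fin k, (X (vr k u w) : MvPolynomial (ℕ × ℕ) ℝ)
      = ∑ u : Fin k, ∑ w : Fin (k-1), X (vr k u w) := Finset.sum_comm
  simp only [Finset.sum_sub_distrib]
  rw [hc]
  simp only [Finset.sum_const, Finset.card_univ, Fintype.card_fin, nsmul_eq_mul, mul_one]
  have hcast : ((k - 1 : ℕ) : MvPolynomial (ℕ × ℕ) ℝ)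
      = (k : MvPolynomial (ℕ × ℕ) ℝ) - 1 := by
    rw [Nat.cast_sub (by omega : 1 ≤ k)]
    norm_num
  rw [hcast]
  ring

theorem encode_pigeon (k : ℕ) (hk : 2 ≤ k) (u₀ : ℕ) :
    encodeIneqSA ((Finset.Icc 1 (k - 1)).image (fun w => (((u₀, w) : ℕ × ℕ), true)))
      = (∑ w : Fin (k-1), X ((u₀, (w:ℕ)+1) : ℕ × ℕ)) - 1 := by
  unfold encodeIneqSA
  congr 1
  rw [Finset.sum_image (by intro x hx y hy h; simpa using h)]
  simp only [if_true]
  have hIcc : Finset.Icc 1 (k-1) = Finset.Ico 1 k := by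
    rw [← Finset.Ico_add_one_right_eq_Icc, Nat.sub_add_cancel (by omega)]
  rw [hIcc, Finset.sum_Ico_eq_sum_range]
  rw [Fin.sum_univ_eq_sum_range (fun w => (X (u₀, w+1) : MvPolynomial (ℕ × ℕ) ℝ))]
  apply Finset.sum_congr rfl
  intro i _
  rw [Nat.add_comm]

theorem encode_hole (u₀ v₀ w₀ : ℕ) (h : u₀ ≠ v₀) :
    encodeIneqSA ({(((u₀, w₀) : ℕ × ℕ), false), (((v₀, w₀) : ℕ × ℕ), false)} : Clause (ℕ × ℕ))
      = 1 - X (u₀, w₀) - X (v₀, w₀) := by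
  unfold encodeIneqSA
  rw [Finset.sum_pair (by simp [h])]
  simp only [if_neg Bool.false_ne_true]
  ring

theorem php_mem (k : ℕ) (hk : 2 ≤ k) (t : Idx k) :
    Dp k t ∈ LasAxioms (ℕ × ℕ) ((fun C => encodeIneqSA C) '' PHPf k) := by
  obtain (u | w | ⟨w, u⟩ | ⟨w, u, v⟩ | ⟨w, u, v⟩) := t
  · apply las_mem_of_Q
    refine ⟨(Finset.Icc 1 (k-1)).image (fun w => (((u.1+1, w) : ℕ × ℕ), true)),
      Or.inl ⟨u.1+1, by omega, by have := u.isLt; omega, rfl⟩, ?_⟩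
    dsimp only
    rw [encode_pigeon k hk (u.1+1)]
    simp [Dp, vr]
  · exact las_mem_of_sq _
  · exact las_mem_of_bool ⟨vr k u w, Or.inr rfl⟩
  · by_cases h : u = v
    · rw [show Dp k (.inr (.inr (.inr (.inl (w, u, v))))) = 1 from by simp [Dp, h]]
      exact las_mem_of_one
    · apply las_mem_of_Q
      have huv : u.1 + 1 ≠ v.1 + 1 := by
        intro hc
        exact h (Fin.ext (by omega))
      refine ⟨{(((u.1+1, w.1+1) : ℕ × ℕ), false), (((v.1+1, w.1+1) : ℕ × ℕ), false)},
        Or.inr ⟨u.1+1, v.1+1, w.1+1, by omega, by have := u.isLt; omega, by omega,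
          by have := v.isLt; omega, huv, by omega, by have := w.isLt; omega, rfl⟩, ?_⟩
      dsimp only
      rw [encode_hole _ _ _ huv]
      simp [Dp, vr, h]
  · exact las_mem_of_bool ⟨vr k u w, Or.inl rfl⟩

theorem deg_sumX_le (n : ℕ) (f : Fin n → ℕ × ℕ) :
    ((∑ w : Fin n, X (f w) : MvPolynomial (ℕ × ℕ) ℝ)).totalDegree ≤ 1 := by
  apply le_trans (totalDegree_finset_sum _ _)
  apply Finset.sup_le; intro w _; simp [totalDegree_X]

theorem php_deg (k : ℕ) (hk : 2 ≤ k) (t : Idx k) :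
    (expandTerm (DI k t) ∅ (Dp k t)).totalDegree ≤ 2 := by
  obtain (u | w | ⟨w, u⟩ | ⟨w, u, v⟩ | ⟨w, u, v⟩) := t
  · show (expandTerm ∅ ∅ ((∑ w : Fin (k-1), X (vr k u w)) - 1)).totalDegree ≤ 2
    rw [expandTerm_nil]
    apply le_trans (totalDegree_sub _ _)
    simp only [max_le_iff, totalDegree_one]
    exact ⟨le_trans (deg_sumX_le _ _) one_le_two, Nat.zero_le _⟩
  · show (expandTerm ∅ ∅ (((1 : MvPolynomial (ℕ × ℕ) ℝ)
        - ∑ u : Fin k, X (vr k u w)) ^ 2)).totalDegree ≤ 2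
    rw [expandTerm_nil]
    apply le_trans (totalDegree_pow _ _)
    have h1 : ((1 : MvPolynomial (ℕ × ℕ) ℝ) - ∑ u : Fin k, X (vr k u w)).totalDegree ≤ 1 := by
      apply le_trans (totalDegree_sub _ _)
      simp only [max_le_iff, totalDegree_one]
      exact ⟨Nat.zero_le _, deg_sumX_le _ _⟩
    omega
  · show (expandTerm ∅ ∅ (X (vr k u w) - X (vr k u w) ^ 2)).totalDegree ≤ 2
    rw [expandTerm_nil]
    apply le_trans (totalDegree_sub _ _)
    simp only [max_le_iff]
    refine ⟨by simp [totalDegree_X], ?_⟩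
    apply le_trans (totalDegree_pow _ _)
    simp [totalDegree_X]
  · show (expandTerm {vr k u w} ∅ (if u = v then 1
        else 1 - X (vr k u w) - X (vr k v w))).totalDegree ≤ 2
    rw [expandTerm_single]
    apply le_trans (totalDegree_mul _ _)
    have h1 : (if u = v then (1 : MvPolynomial (ℕ × ℕ) ℝ)
        else 1 - X (vr k u w) - X (vr k v w)).totalDegree ≤ 1 := by
      split
      · simp
      · apply le_trans (totalDegree_sub _ _)
        simp only [max_le_iff]
        refine ⟨le_trans (totalDegree_sub _ _) ?_, by simp [totalDegree_X]⟩
        simp [totalDegree_X, totalDegree_one]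
    simp only [totalDegree_X]
    omega
  · show (expandTerm ∅ ∅ (X (vr k u w) ^ 2 - X (vr k u w))).totalDegree ≤ 2
    rw [expandTerm_nil]
    apply le_trans (totalDegree_sub _ _)
    simp only [max_le_iff]
    refine ⟨?_, by simp [totalDegree_X]⟩
    apply le_trans (totalDegree_pow _ _)
    simp [totalDegree_X]

theorem php_nonneg (k : ℕ) (t : Idx k) : 0 ≤ Dα k t := by
  obtain (u | w | z | ⟨w, u, v⟩ | ⟨w, u, v⟩) := t <;>
    first
      | exact zero_le_one
      | (dsimp [Dα]; split <;> norm_num)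


/-- for every `k ≥ 2`, the pigeonhole principle formula
`PHP^k_{k−1}` has a Lasserre refutation of rank 2. -/
theorem php_lasserre_rank_two (k : ℕ) (hk : 2 ≤ k) :
    ∃ d : SAStyleDeriv (ℕ × ℕ)
        (LasAxioms (ℕ × ℕ) ((fun C => encodeIneqSA C) '' PHPf k)) (-1),
      d.rankLE 2 := by
  refine ⟨derivOfFintype (Dα k) (DI k) (fun _ => ∅) (Dp k)
      (php_nonneg k) (php_mem k hk) (php_main_sum k hk), ?_⟩
  exact derivOfFintype_rankLE _ _ _ _ _ _ _ (php_deg k hk)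

end NarrowProofs
end

section
/- For every n ≥ 2, the inequality 1 − ∑_{i∈[n]} z_i ≥ 0 has a Lasserre derivation of rank 2 from the set of inequalities {1 − z_i − z_j ≥ 0 : i,j∈[n], i ≠ j}. -/
namespace NarrowProofs

open MvPolynomial

private lemma key_identity (n : ℕ) :
    ((1 - ∑ i : Fin n, X i) ^ 2 : MvPolynomial (Fin n) ℝ)
      + ∑ i : Fin n, (X i - X i ^ 2)
      + ∑ i : Fin n, ((n : ℝ) - 1) • (X i ^ 2 - X i)
      + ∑ i : Fin n, ∑ j : Fin n,
          (if i = j then 0 else X i * (1 - X i - X j))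
      = 1 - ∑ i : Fin n, X i := by
  have hd : ∀ i : Fin n,
      (∑ j : Fin n, (if i = j then 0 else X i * (1 - X i - X j)) : MvPolynomial (Fin n) ℝ)
        = (∑ j : Fin n, X i * (1 - X i - X j)) - X i * (1 - X i - X i) := by
    intro i
    have h : ∀ j : Fin n, (if i = j then (0 : MvPolynomial (Fin n) ℝ)
        else X i * (1 - X i - X j))
        = X i * (1 - X i - X j) - (if i = j then X i * (1 - X i - X j) else 0) := by
      intro j; split_ifs <;> ring
    rw [Finset.sum_congr rfl fun j _ => h j, Finset.sum_sub_distrib, Finset.sum_ite_eq]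
    simp
  rw [Finset.sum_congr rfl fun i _ => hd i]
  simp only [smul_sub, sub_smul, one_smul, mul_sub, mul_one, Finset.sum_sub_distrib,
    Finset.sum_const, Finset.card_univ, Fintype.card_fin, ← Finset.mul_sum,
    ← Finset.sum_mul, nsmul_eq_mul]
  have hC : ∀ p : MvPolynomial (Fin n) ℝ, ((n : ℝ)) • p = (n : MvPolynomial (Fin n) ℝ) * p := by
    intro p; rw [smul_eq_C_mul, map_natCast]
  simp only [hC, pow_two, mul_assoc, ← Finset.mul_sum]
  ring


/-- for every `n ≥ 2`, the inequality `1 − ∑_{i∈[n]} z_i ≥ 0`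
has a Lasserre derivation of rank 2 from the set of inequalities
`{1 − z_i − z_j ≥ 0 : i,j ∈ [n], i ≠ j}`. -/
theorem lasserre_rank_two_sum (n : ℕ) (hn : 2 ≤ n) :
    ∃ d : SAStyleDeriv (Fin n)
        (LasAxioms (Fin n) {p | ∃ i j : Fin n, i ≠ j ∧ p = 1 - X i - X j})
        (1 - ∑ i : Fin n, X i),
      d.rankLE 2 := by
  classical
  set S : MvPolynomial (Fin n) ℝ := ∑ i : Fin n, X i with hS
  let T := Unit ⊕ (Fin n ⊕ (Fin n ⊕ Fin n × Fin n))
  let αf : T → ℝ := fun x => match x with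
    | .inl _ => 1
    | .inr (.inl _) => 1
    | .inr (.inr (.inl _)) => (n : ℝ) - 1
    | .inr (.inr (.inr (i, j))) => if i = j then 0 else 1
  let If : T → Finset (Fin n) := fun x => match x with
    | .inr (.inr (.inr (i, j))) => if i = j then ∅ else {i}
    | _ => ∅
  let pf : T → MvPolynomial (Fin n) ℝ := fun x => match x with
    | .inl _ => (1 - S) ^ 2
    | .inr (.inl i) => X i - X i ^ 2
    | .inr (.inr (.inl i)) => X i ^ 2 - X i
    | .inr (.inr (.inr (i, j))) => if i = j then 1 else 1 - X i - X j
  let e := Fintype.equivFin T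
  have hα : ∀ x : T, 0 ≤ αf x := by
    rintro (_ | i | i | ⟨i, j⟩)
    · norm_num [αf]
    · norm_num [αf]
    · simp only [αf]
      have : (2 : ℝ) ≤ (n : ℝ) := by exact_mod_cast hn
      linarith
    · simp only [αf]
      split_ifs <;> norm_num
  have hmem : ∀ x : T, pf x ∈ LasAxioms (Fin n) {p | ∃ i j : Fin n, i ≠ j ∧ p = 1 - X i - X j} := by
    rintro (_ | i | i | ⟨i, j⟩)
    · exact Or.inr ⟨1 - S, rfl⟩
    · exact Or.inl (Or.inl (Or.inr ⟨i, Or.inr rfl⟩))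
    · exact Or.inl (Or.inl (Or.inr ⟨i, Or.inl rfl⟩))
    · simp only [pf]
      split_ifs with h
      · exact Or.inl (Or.inr rfl)
      · exact Or.inl (Or.inl (Or.inl ⟨i, j, h, rfl⟩))
  refine ⟨⟨Fintype.card T, fun t => αf (e.symm t), fun t => If (e.symm t),
      fun _ => ∅, fun t => pf (e.symm t), fun t => hα (e.symm t), fun t => hmem (e.symm t), ?_⟩, ?_⟩
  · rw [Equiv.sum_comp e.symm (fun x => αf x • expandTerm (If x) ∅ (pf x))]
    have hsplit : (∑ x : T, αf x • expandTerm (If x) ∅ (pf x))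
        = αf (.inl ()) • expandTerm (If (.inl ())) ∅ (pf (.inl ()))
          + ∑ i : Fin n, αf (.inr (.inl i)) • expandTerm (If (.inr (.inl i))) ∅ (pf (.inr (.inl i)))
          + ∑ i : Fin n, αf (.inr (.inr (.inl i))) • expandTerm (If (.inr (.inr (.inl i)))) ∅ (pf (.inr (.inr (.inl i))))
          + ∑ q : Fin n × Fin n, αf (.inr (.inr (.inr q))) • expandTerm (If (.inr (.inr (.inr q)))) ∅ (pf (.inr (.inr (.inr q)))) := by
      rw [Fintype.sum_sum_type, Fintype.sum_sum_type, Fintype.sum_sum_type]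
      simp [add_assoc]
    rw [hsplit]
    have hpair : ∀ q : Fin n × Fin n,
        αf (.inr (.inr (.inr q))) • expandTerm (If (.inr (.inr (.inr q)))) ∅ (pf (.inr (.inr (.inr q))))
          = if q.1 = q.2 then 0 else X q.1 * (1 - X q.1 - X q.2) := by
      rintro ⟨i, j⟩
      simp only [αf, If, pf, expandTerm]
      split_ifs <;> simp
    rw [Finset.sum_congr rfl fun q _ => hpair q]
    have h1 : ∀ i : Fin n,
        αf (.inr (.inl i)) • expandTerm (If (.inr (.inl i))) ∅ (pf (.inr (.inl i)))
          = X i - X i ^ 2 := by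
      intro i; simp [αf, If, pf, expandTerm]
    have h2 : ∀ i : Fin n,
        αf (.inr (.inr (.inl i))) • expandTerm (If (.inr (.inr (.inl i)))) ∅ (pf (.inr (.inr (.inl i))))
          = ((n : ℝ) - 1) • (X i ^ 2 - X i) := by
      intro i; simp [αf, If, pf, expandTerm]
    rw [Finset.sum_congr rfl fun i _ => h1 i, Finset.sum_congr rfl fun i _ => h2 i]
    have h0 : αf (.inl ()) • expandTerm (If (.inl ())) ∅ (pf (.inl ())) = (1 - S) ^ 2 := by
      simp [αf, If, pf, expandTerm]
    rw [h0, Fintype.sum_prod_type, hS]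
    exact key_identity n
  · have hdeg : ∀ x : T, (expandTerm (If x) ∅ (pf x)).totalDegree ≤ 2 := by
      rintro (_ | i | i | ⟨i, j⟩)
      · simp only [If, pf, expandTerm, Finset.prod_empty, one_mul, mul_one]
        calc ((1 - S) ^ 2).totalDegree ≤ 2 * (1 - S).totalDegree := totalDegree_pow _ _
          _ ≤ 2 * 1 := by
              refine Nat.mul_le_mul_left _ ?_
              refine le_trans (totalDegree_sub _ _) ?_
              refine max_le (by simp) ?_
              refine le_trans (totalDegree_finset_sum _ _) ?_
              exact Finset.sup_le fun i _ => le_of_eq (totalDegree_X i)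
          _ = 2 := rfl
      · simp only [If, pf, expandTerm, Finset.prod_empty, one_mul, mul_one]
        refine le_trans (totalDegree_sub _ _) (max_le ?_ ?_)
        · simp [totalDegree_X]
        · calc (X i ^ 2 : MvPolynomial (Fin n) ℝ).totalDegree ≤ 2 * (X i).totalDegree :=
              totalDegree_pow _ _
            _ = 2 := by rw [totalDegree_X]
      · simp only [If, pf, expandTerm, Finset.prod_empty, one_mul, mul_one]
        refine le_trans (totalDegree_sub _ _) (max_le ?_ ?_)
        · calc (X i ^ 2 : MvPolynomial (Fin n) ℝ).totalDegree ≤ 2 * (X i).totalDegree :=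
              totalDegree_pow _ _
            _ = 2 := by rw [totalDegree_X]
        · simp [totalDegree_X]
      · simp only [If, pf, expandTerm]
        split_ifs with h
        · simp
        · rw [Finset.prod_empty, Finset.prod_singleton, mul_one]
          refine le_trans (totalDegree_mul _ _) ?_
          have hx : (X i : MvPolynomial (Fin n) ℝ).totalDegree = 1 := totalDegree_X i
          have hy : (1 - X i - X j : MvPolynomial (Fin n) ℝ).totalDegree ≤ 1 := by
            refine le_trans (totalDegree_sub _ _) (max_le ?_ ?_)
            · refine le_trans (totalDegree_sub _ _) (max_le ?_ ?_) <;> simp [totalDegree_X]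
            · simp [totalDegree_X]
          omega
    exact fun t => hdeg (e.symm t)

end NarrowProofs
end
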